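/- Let n ≥ 1 and k be integers with 2n + 1 ≤ k. Every k-peg Hanoi group generated by a set S with 1 ∈ S ⊆ R̲_{k,n} is contracting. -/

import Mathlib

/-!
Common framework: automorphisms of the rooted tree `X_k^*`, root permutations,
sections, self-similar and contracting groups, Hanoi automorphisms and Hanoi
groups, following Makisumi–Stadnyk–Steinhurst, "Modified Hanoi Towers Groups
and Limit Spaces".

A word `x_n … x_1` over the alphabet `X_k = Fin k` is encoded as the list
`[x_n, …, x_1]`, whose head `x_n` is the first letter, i.e. the letter that a
tree automorphism reads (and permutes) first.
-/

namespace Hanoi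

/-- Words over the alphabet `X_k = Fin k`. -/
abbrev Word (k : ℕ) := List (Fin k)

/-- `e` is an automorphism of the rooted tree `X_k^*`: it fixes the root
(the empty word), preserves word length (levels) and preserves the tree
structure (words sharing an initial segment of length `n` are sent to words
sharing an initial segment of length `n`). -/
def IsTreeAut {k : ℕ} (e : Equiv.Perm (Word k)) : Prop :=
  (∀ w : Word k, (e w).length = w.length) ∧
    ∀ (w v : Word k) (n : ℕ), w.take n = v.take n → (e w).take n = (e v).take n

open Classical in
/-- The root permutation `σ_e` of a tree automorphism `e` (its action on
one-letter words). -/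
noncomputable def rootPerm {k : ℕ} (e : Equiv.Perm (Word k)) : Equiv.Perm (Fin k) :=
  if h : Function.Bijective (fun x : Fin k => ((e [x]).head?.getD x)) then
    Equiv.ofBijective _ h
  else 1

open Classical in
/-- The section `e|_x` of `e` at a letter `x`: the unique automorphism with
`e (x :: w) = σ_e x :: (e|_x) w` for all words `w`. -/
noncomputable def sec {k : ℕ} (e : Equiv.Perm (Word k)) (x : Fin k) : Equiv.Perm (Word k) :=
  if h : Function.Bijective (fun w : Word k => (e (x :: w)).tail) then
    Equiv.ofBijective _ h
  else 1

/-- The section `e|_v` of `e` at a word `v = x_n … x_1`, defined by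
`e|_v = (e|_{x_n})|_{x_{n-1} … x_1}`. -/
noncomputable def secW {k : ℕ} (e : Equiv.Perm (Word k)) : Word k → Equiv.Perm (Word k)
  | [] => e
  | x :: v => secW (sec e x) v

/-- A subgroup of the permutations of `X_k^*` is self-similar if it consists of
tree automorphisms and is closed under taking sections. -/
def IsSelfSimilar {k : ℕ} (G : Subgroup (Equiv.Perm (Word k))) : Prop :=
  (∀ g ∈ G, IsTreeAut g) ∧ ∀ g ∈ G, ∀ x : Fin k, sec g x ∈ G

/-- A self-similar group `G` is contracting if there is a finite subset `N ⊆ G`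
such that for every `g ∈ G` all sections of `g` at words of length at least
some `m` lie in `N`. -/
def IsContracting {k : ℕ} (G : Subgroup (Equiv.Perm (Word k))) : Prop :=
  ∃ N : Set (Equiv.Perm (Word k)), N.Finite ∧ N ⊆ (G : Set (Equiv.Perm (Word k))) ∧
    ∀ g ∈ G, ∃ m : ℕ, ∀ v : Word k, m ≤ v.length → secW g v ∈ N

/-- `N` is the nucleus of `G`: a smallest finite subset of `G` catching all
deep enough sections of every element of `G`. -/
def IsNucleus {k : ℕ} (G : Subgroup (Equiv.Perm (Word k)))
    (N : Set (Equiv.Perm (Word k))) : Prop :=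
  (N.Finite ∧ N ⊆ (G : Set (Equiv.Perm (Word k))) ∧
    ∀ g ∈ G, ∃ m : ℕ, ∀ v : Word k, m ≤ v.length → secW g v ∈ N) ∧
  ∀ N' : Set (Equiv.Perm (Word k)), N'.Finite → N' ⊆ (G : Set (Equiv.Perm (Word k))) →
    (∀ g ∈ G, ∃ m : ℕ, ∀ v : Word k, m ≤ v.length → secW g v ∈ N') → N ⊆ N'

/-- `a` is a Hanoi automorphism with set of inactive pegs `Q`: the section at
each active peg (element of the complement of `Q`) is trivial, the section at
each inactive peg is `a` itself, and the root permutation fixes each inactive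
peg. -/
def IsHanoiWith {k : ℕ} (a : Equiv.Perm (Word k)) (Q : Set (Fin k)) : Prop :=
  IsTreeAut a ∧ (∀ i ∉ Q, sec a i = 1) ∧ (∀ j ∈ Q, sec a j = a) ∧
    ∀ j ∈ Q, rootPerm a j = j

/-- `a` is a `k`-peg Hanoi automorphism. -/
def IsHanoiAut {k : ℕ} (a : Equiv.Perm (Word k)) : Prop := ∃ Q, IsHanoiWith a Q

open Classical in
/-- The set `Q_a` of inactive pegs of a Hanoi automorphism `a`; by convention
`Q_1 = X_k` (for `a ≠ 1` the set of inactive pegs is uniquely determined). -/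
noncomputable def inactivePegs {k : ℕ} (a : Equiv.Perm (Word k)) : Set (Fin k) :=
  if a = 1 then Set.univ
  else if h : ∃ Q, IsHanoiWith a Q then h.choose else ∅

/-- `S_{k,q}`: the set of Hanoi automorphisms over `X_k` with exactly `q`
inactive pegs. -/
noncomputable def hanoiSet (k q : ℕ) : Set (Equiv.Perm (Word k)) :=
  {a | IsHanoiAut a ∧ (inactivePegs a).ncard = q}

/-- `L = [s_n, …, s_1]` is a representation of `g` over the generating set `S`:
each `s_i ∈ S ∪ S⁻¹` and `g = s_n ⋯ s_2 s_1`. -/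
def IsRepOf {k : ℕ} (S : Set (Equiv.Perm (Word k))) (L : List (Equiv.Perm (Word k)))
    (g : Equiv.Perm (Word k)) : Prop :=
  (∀ s ∈ L, s ∈ S ∨ s⁻¹ ∈ S) ∧ L.prod = g

/-- The length `l(g)` of `g` with respect to `S`: the length of a minimal
representation (`0` for the identity). -/
noncomputable def repLength {k : ℕ} (S : Set (Equiv.Perm (Word k)))
    (g : Equiv.Perm (Word k)) : ℕ :=
  sInf {n | ∃ L, IsRepOf S L g ∧ L.length = n}

/-- The essential set of a representation: the intersection of the sets of
inactive pegs of its letters. -/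
noncomputable def essSet {k : ℕ} (L : List (Equiv.Perm (Word k))) : Set (Fin k) :=
  ⋂ s ∈ L, inactivePegs s

/-- The prenucleus of `G`: the set of elements `g ∈ G` with `g|_j = g` for some
letter `j`. -/
noncomputable def preNucleus {k : ℕ} (G : Subgroup (Equiv.Perm (Word k))) :
    Set (Equiv.Perm (Word k)) :=
  {g | g ∈ G ∧ ∃ j : Fin k, sec g j = g}

/-- The underlying function of the Hanoi Towers move `a_{ij}`: it changes the
first occurrence of `i` or `j` in a word by means of the transposition `(i j)`
and leaves the rest of the word unchanged. -/
def hanoiMoveFun {k : ℕ} (i j : Fin k) : Word k → Word k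
  | [] => []
  | x :: w => if x = i ∨ x = j then Equiv.swap i j x :: w else x :: hanoiMoveFun i j w

theorem hanoiMoveFun_involutive {k : ℕ} (i j : Fin k) :
    Function.Involutive (hanoiMoveFun i j) := by
  intro w
  induction w with
  | nil => rfl
  | cons x t ih =>
    by_cases h : x = i ∨ x = j
    · have h2 : Equiv.swap i j x = i ∨ Equiv.swap i j x = j := by
        rcases h with h | h <;> subst h <;> simp
      simp only [hanoiMoveFun, if_pos h, if_pos h2, Equiv.swap_apply_self]
    · simp only [hanoiMoveFun, if_neg h, ih]

/-- The Hanoi Towers move `a_{ij}`, as a permutation of `X_k^*`: its root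
permutation is the transposition `(i j)`, its sections at `i` and `j` are
trivial and all its other sections equal `a_{ij}` itself. -/
def hanoiMove {k : ℕ} (i j : Fin k) : Equiv.Perm (Word k) :=
  (hanoiMoveFun_involutive i j).toPerm

/-- The orbit of the letter `j` under the subgroup of `Sym(X_k)` generated by
the root permutations of the elements of `T`. -/
noncomputable def orbT {k : ℕ} (T : Finset (Equiv.Perm (Word k))) (j : Fin k) : Set (Fin k) :=
  MulAction.orbit (Subgroup.closure ((fun a => rootPerm a) '' (T : Set (Equiv.Perm (Word k))))) j

/-- The set `Fix(T)` of letters fixed by the root permutation of every element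
of `T`. -/
noncomputable def fixT {k : ℕ} (T : Finset (Equiv.Perm (Word k))) : Set (Fin k) :=
  {x | ∀ s ∈ T, rootPerm s x = x}

/-- Condition (*) on a generating set `S` of Hanoi automorphisms: for every
finite `T ⊆ S` with nonempty essential set and every letter `j ∉ Fix(T)`,
the orbit of `j` misses the inactive pegs of some element of `T`. -/
noncomputable def CondStar {k : ℕ} (S : Set (Equiv.Perm (Word k))) : Prop :=
  ∀ T : Finset (Equiv.Perm (Word k)), (T : Set (Equiv.Perm (Word k))) ⊆ S →
    (⋂ s ∈ T, inactivePegs s).Nonempty →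
    ∀ j : Fin k, j ∉ fixT T →
      ∃ s ∈ T, orbT T j ∩ inactivePegs s = ∅

open Classical in
/-- `d(g)`: the least number of distinct generators occurring among all
representations of `g` having nonempty essential set. -/
noncomputable def dCount {k : ℕ} (S : Set (Equiv.Perm (Word k)))
    (g : Equiv.Perm (Word k)) : ℕ :=
  sInf {M | ∃ L, IsRepOf S L g ∧ (essSet L).Nonempty ∧ L.toFinset.card = M}

/-- `S` is fully symmetric: for every non-identity `a ∈ S` and every
`φ ∈ Sym(X_k)`, the Hanoi automorphism `φ·a` with inactive pegs `φ(Q_a)` and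
root permutation `φ ∘ σ_a ∘ φ⁻¹` again lies in `S`. -/
noncomputable def FullySymmetric {k : ℕ} (S : Set (Equiv.Perm (Word k))) : Prop :=
  ∀ a ∈ S, a ≠ 1 → ∀ φ : Equiv.Perm (Fin k), ∀ b : Equiv.Perm (Word k),
    IsHanoiWith b (φ '' inactivePegs a) →
    rootPerm b = φ * rootPerm a * φ⁻¹ → b ∈ S

/-- The family `R̲_{k,n}`: the identity together with all Hanoi automorphisms
`a` such that (1) `Q_a ⊆ {m+1, …, m+n}` for some `m`, and (2) whenever
`i ∈ Q_a` the root permutation of `a` fixes `i-1, …, i-(n-1)`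
(all peg labels mod `k`). -/
noncomputable def Runder (k n : ℕ) : Set (Equiv.Perm (Word k)) :=
  {a | a = 1 ∨ (IsHanoiAut a ∧
    (∃ m : Fin k, ∀ q ∈ inactivePegs a, ∃ t : ℕ, 1 ≤ t ∧ t ≤ n ∧
      (q : ℕ) = ((m : ℕ) + t) % k) ∧
    ∀ i ∈ inactivePegs a, ∀ x : Fin k, ∀ t : ℕ, 1 ≤ t → t ≤ n - 1 →
      ((x : ℕ) + t) % k = (i : ℕ) → rootPerm a x = x)}

/-- The family `R̄_{k,n}`: the identity together with all Hanoi automorphisms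
`a` such that (1) `Q_a ⊆ {m+1, …, m+n}` for some `m`, and (2) whenever
`i ∈ Q_a` the root permutation of `a` fixes `i+1, …, i+(n-1)`
(all peg labels mod `k`). -/
noncomputable def Rover (k n : ℕ) : Set (Equiv.Perm (Word k)) :=
  {a | a = 1 ∨ (IsHanoiAut a ∧
    (∃ m : Fin k, ∀ q ∈ inactivePegs a, ∃ t : ℕ, 1 ≤ t ∧ t ≤ n ∧
      (q : ℕ) = ((m : ℕ) + t) % k) ∧
    ∀ i ∈ inactivePegs a, ∀ x : Fin k, ∀ t : ℕ, 1 ≤ t → t ≤ n - 1 →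
      (x : ℕ) = ((i : ℕ) + t) % k → rootPerm a x = x)}

/-- The finite word `x_m … x_1` (first letter `x_m`) read off from a
left-infinite sequence `… x_2 x_1`, encoded as `x : ℕ → Fin k` with
`x s = x_{s+1}`. -/
def wordOf {k : ℕ} (x : ℕ → Fin k) (m : ℕ) : Word k := (List.range m).reverse.map x

/-! ### Auxiliary development for the proof of Statement 16 -/

theorem Equiv.Perm.apply_inv_self {α : Type*} (e : Equiv.Perm α) (x : α) : e (e⁻¹ x) = x :=
  e.apply_symm_apply x

theorem Equiv.Perm.inv_apply_self {α : Type*} (e : Equiv.Perm α) (x : α) : e⁻¹ (e x) = x :=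
  e.symm_apply_apply x

section Aux
variable {k : ℕ}

theorem isTreeAut_one : IsTreeAut (1 : Equiv.Perm (Word k)) :=
  ⟨fun _ => rfl, fun _ _ _ h => h⟩

theorem IsTreeAut.mul {e f : Equiv.Perm (Word k)} (he : IsTreeAut e) (hf : IsTreeAut f) :
    IsTreeAut (e * f) := by
  constructor
  · intro w; rw [Equiv.Perm.mul_apply, he.1, hf.1]
  · intro w v n h
    rw [Equiv.Perm.mul_apply, Equiv.Perm.mul_apply]
    exact he.2 _ _ _ (hf.2 _ _ _ h)

theorem IsTreeAut.take_apply {e : Equiv.Perm (Word k)} (he : IsTreeAut e) {n : ℕ} {w : Word k}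
    (h : n ≤ w.length) : (e w).take n = e (w.take n) := by
  have h1 := he.2 w (w.take n) n (by rw [List.take_take, min_self])
  rw [h1]
  apply List.take_of_length_le
  rw [he.1, List.length_take]
  omega

theorem eq_of_take_eq {w v : Word k} {n : ℕ} (h : w.take n = v.take n) (hw : w.length < n) :
    w = v := by
  have hl := congrArg List.length h
  simp only [List.length_take] at hl
  have h1 : w.take n = w := List.take_of_length_le (by omega)
  have h2 : v.take n = v := List.take_of_length_le (by omega)
  rw [h1, h2] at h; exact h

theorem IsTreeAut.inv {e : Equiv.Perm (Word k)} (he : IsTreeAut e) : IsTreeAut e⁻¹ := by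
  have hlen : ∀ w : Word k, (e⁻¹ w).length = w.length := by
    intro w
    conv_rhs => rw [← Equiv.Perm.apply_inv_self e w]
    rw [he.1]
  refine ⟨hlen, ?_⟩
  intro w v n h
  by_cases hw : n ≤ w.length
  · by_cases hv : n ≤ v.length
    · have hw' : n ≤ (e⁻¹ w).length := by rw [hlen]; exact hw
      have hv' : n ≤ (e⁻¹ v).length := by rw [hlen]; exact hv
      have h1 : e ((e⁻¹ w).take n) = w.take n := by
        rw [← he.take_apply hw', Equiv.Perm.apply_inv_self]
      have h2 : e ((e⁻¹ v).take n) = v.take n := by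
        rw [← he.take_apply hv', Equiv.Perm.apply_inv_self]
      exact e.injective (h1.trans (h.trans h2.symm))
    · rw [eq_of_take_eq h.symm (by omega)]
  · rw [eq_of_take_eq h (by omega)]

theorem treeAut_nil {e : Equiv.Perm (Word k)} (he : IsTreeAut e) : e [] = [] :=
  List.length_eq_zero_iff.mp (he.1 [])

theorem IsTreeAut.singleton_eq {e : Equiv.Perm (Word k)} (he : IsTreeAut e) (x : Fin k) :
    e [x] = [(e [x]).head?.getD x] := by
  obtain ⟨c, hc⟩ := List.length_eq_one_iff.mp (he.1 [x])
  rw [hc]; rfl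

theorem IsTreeAut.rootPermFun_bijective {e : Equiv.Perm (Word k)} (he : IsTreeAut e) :
    Function.Bijective (fun x : Fin k => ((e [x]).head?.getD x)) := by
  constructor
  · intro x y hxy
    have h1 := he.singleton_eq x
    have h2 := he.singleton_eq y
    have h3 : e [x] = e [y] := by rw [h1, h2]; simp only [hxy]
    simpa using e.injective h3
  · intro y
    obtain ⟨c, hc⟩ := List.length_eq_one_iff.mp (he.inv.1 [y])
    refine ⟨c, ?_⟩
    have h : e [c] = [y] := by rw [← hc, Equiv.Perm.apply_inv_self]
    simp [h]

theorem rootPerm_apply {e : Equiv.Perm (Word k)} (he : IsTreeAut e) (x : Fin k) :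
    e [x] = [rootPerm e x] := by
  rw [rootPerm, dif_pos he.rootPermFun_bijective]
  exact he.singleton_eq x

theorem take_one_cons {l : Word k} {a : Fin k} (h : l.take 1 = [a]) : l = a :: l.tail := by
  cases l with
  | nil => simp at h
  | cons b t => simp_all

theorem cons_eq_rootPerm {e : Equiv.Perm (Word k)} (he : IsTreeAut e) (x : Fin k) (w : Word k) :
    e (x :: w) = rootPerm e x :: (e (x :: w)).tail := by
  have h1 : (e (x :: w)).take 1 = (e [x]).take 1 := he.2 _ _ 1 (by simp)
  rw [rootPerm_apply he] at h1
  exact take_one_cons (by simpa using h1)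

theorem secFun_bijective {e : Equiv.Perm (Word k)} (he : IsTreeAut e) (x : Fin k) :
    Function.Bijective (fun w : Word k => (e (x :: w)).tail) := by
  constructor
  · intro w v h
    dsimp only at h
    have h3 : e (x :: w) = e (x :: v) := by
      rw [cons_eq_rootPerm he x w, cons_eq_rootPerm he x v, h]
    simpa using e.injective h3
  · intro u
    have h2 : e⁻¹ [rootPerm e x] = [x] := by
      apply e.injective; rw [Equiv.Perm.apply_inv_self, rootPerm_apply he]
    have h1 : (e⁻¹ (rootPerm e x :: u)).take 1 = [x] := by
      have h3 := he.inv.2 (rootPerm e x :: u) [rootPerm e x] 1 (by simp)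
      rw [h2] at h3; simpa using h3
    have hcons := take_one_cons h1
    refine ⟨(e⁻¹ (rootPerm e x :: u)).tail, ?_⟩
    show (e (x :: (e⁻¹ (rootPerm e x :: u)).tail)).tail = u
    rw [← hcons, Equiv.Perm.apply_inv_self]
    rfl

theorem sec_spec {e : Equiv.Perm (Word k)} (he : IsTreeAut e) (x : Fin k) (w : Word k) :
    e (x :: w) = rootPerm e x :: sec e x w := by
  rw [sec, dif_pos (secFun_bijective he x)]
  exact cons_eq_rootPerm he x w

theorem IsTreeAut.sec {e : Equiv.Perm (Word k)} (he : IsTreeAut e) (x : Fin k) :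
    IsTreeAut (Hanoi.sec e x) := by
  constructor
  · intro w
    have h := congrArg List.length (sec_spec he x w)
    rw [he.1] at h
    simpa using h.symm
  · intro w v n h
    have h1 := he.2 (x :: w) (x :: v) (n+1) (by simpa using h)
    rw [sec_spec he, sec_spec he] at h1
    simpa using h1

theorem rootPerm_one : rootPerm (1 : Equiv.Perm (Word k)) = 1 := by
  refine Equiv.ext fun x => ?_
  have h := rootPerm_apply (isTreeAut_one (k := k)) x
  simpa using h.symm

theorem sec_one (x : Fin k) : sec (1 : Equiv.Perm (Word k)) x = 1 := by
  refine Equiv.ext fun w => ?_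
  have h := sec_spec (isTreeAut_one (k := k)) x w
  rw [rootPerm_one] at h
  simpa using h.symm

theorem rootPerm_mul {e f : Equiv.Perm (Word k)} (he : IsTreeAut e) (hf : IsTreeAut f)
    (x : Fin k) : rootPerm (e * f) x = rootPerm e (rootPerm f x) := by
  have h1 := rootPerm_apply (he.mul hf) x
  rw [Equiv.Perm.mul_apply, rootPerm_apply hf, rootPerm_apply he] at h1
  simpa using h1.symm

theorem sec_mul {e f : Equiv.Perm (Word k)} (he : IsTreeAut e) (hf : IsTreeAut f) (x : Fin k) :
    sec (e * f) x = sec e (rootPerm f x) * sec f x := by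
  refine Equiv.ext fun w => ?_
  have h1 : (e * f) (x :: w) = rootPerm (e * f) x :: sec (e * f) x w := sec_spec (he.mul hf) x w
  have h2 : (e * f) (x :: w)
      = rootPerm e (rootPerm f x) :: sec e (rootPerm f x) (sec f x w) := by
    rw [Equiv.Perm.mul_apply, sec_spec hf x w, sec_spec he]
  rw [rootPerm_mul he hf] at h1
  have h3 := h1.symm.trans h2
  rw [Equiv.Perm.mul_apply]
  simpa using h3

theorem rootPerm_inv {e : Equiv.Perm (Word k)} (he : IsTreeAut e) :
    rootPerm e⁻¹ = (rootPerm e)⁻¹ := by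
  refine Equiv.ext fun y => ?_
  have h := rootPerm_mul he he.inv y
  rw [mul_inv_cancel, rootPerm_one] at h
  apply (rootPerm e).injective
  rw [Equiv.Perm.apply_inv_self]
  simpa using h.symm

theorem sec_inv {e : Equiv.Perm (Word k)} (he : IsTreeAut e) (x : Fin k) :
    sec e⁻¹ (rootPerm e x) = (sec e x)⁻¹ := by
  have h := sec_mul he.inv he x
  rw [inv_mul_cancel, sec_one] at h
  exact mul_eq_one_iff_eq_inv.mp h.symm

theorem isTreeAut_prod {L : List (Equiv.Perm (Word k))} (h : ∀ s ∈ L, IsTreeAut s) :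
    IsTreeAut L.prod := by
  induction L with
  | nil => simpa using isTreeAut_one
  | cons s L' ih =>
    rw [List.prod_cons]
    exact (h s (List.mem_cons_self)).mul (ih fun t ht => h t (List.mem_cons_of_mem s ht))

end Aux

section Aux2
variable {k : ℕ}

theorem isHanoiWith_one : IsHanoiWith (1 : Equiv.Perm (Word k)) Set.univ := by
  refine ⟨isTreeAut_one, ?_, ?_, ?_⟩
  · intro i hi; exact absurd (Set.mem_univ i) hi
  · intro j _; exact sec_one j
  · intro j _; rw [rootPerm_one]; rfl

theorem IsHanoiWith.inv {a : Equiv.Perm (Word k)} {Q : Set (Fin k)} (h : IsHanoiWith a Q) :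
    IsHanoiWith a⁻¹ Q := by
  refine ⟨h.1.inv, ?_, ?_, ?_⟩
  · intro i hi
    have hxi : rootPerm a ((rootPerm a)⁻¹ i) = i := Equiv.apply_symm_apply _ i
    have hx : (rootPerm a)⁻¹ i ∉ Q := by
      intro hxQ
      exact hi (by rw [← hxi, h.2.2.2 _ hxQ]; exact hxQ)
    calc sec a⁻¹ i = sec a⁻¹ (rootPerm a ((rootPerm a)⁻¹ i)) := by rw [hxi]
      _ = (sec a ((rootPerm a)⁻¹ i))⁻¹ := sec_inv h.1 _
      _ = 1 := by rw [h.2.1 _ hx, inv_one]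
  · intro j hj
    calc sec a⁻¹ j = sec a⁻¹ (rootPerm a j) := by rw [h.2.2.2 j hj]
      _ = (sec a j)⁻¹ := sec_inv h.1 _
      _ = a⁻¹ := by rw [h.2.2.1 j hj]
  · intro j hj
    rw [rootPerm_inv h.1]
    apply (rootPerm a).injective
    rw [Equiv.Perm.apply_inv_self, h.2.2.2 j hj]

theorem IsHanoiWith.unique {a : Equiv.Perm (Word k)} {Q Q' : Set (Fin k)}
    (h : IsHanoiWith a Q) (h' : IsHanoiWith a Q') (ha : a ≠ 1) : Q = Q' := by
  ext q
  constructor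
  · intro hq; by_contra hq'
    exact ha (by rw [← h.2.2.1 q hq, h'.2.1 q hq'])
  · intro hq; by_contra hq'
    exact ha (by rw [← h'.2.2.1 q hq, h.2.1 q hq'])

theorem inactivePegs_one : inactivePegs (1 : Equiv.Perm (Word k)) = Set.univ := by
  rw [inactivePegs, if_pos rfl]

theorem IsHanoiAut.spec {a : Equiv.Perm (Word k)} (h : IsHanoiAut a) :
    IsHanoiWith a (inactivePegs a) := by
  by_cases h1 : a = 1
  · subst h1; rw [inactivePegs_one]; exact isHanoiWith_one
  · have h' : ∃ Q, IsHanoiWith a Q := h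
    rw [inactivePegs, if_neg h1, dif_pos h']
    exact h'.choose_spec

theorem inactivePegs_inv {a : Equiv.Perm (Word k)} (h : IsHanoiAut a) :
    inactivePegs a⁻¹ = inactivePegs a := by
  by_cases h1 : a = 1
  · subst h1; rw [inv_one]
  · have h2 : a⁻¹ ≠ 1 := fun hc => h1 (by rw [← inv_inv a, hc, inv_one])
    have h3 : IsHanoiWith a⁻¹ (inactivePegs a) := h.spec.inv
    have h4 : IsHanoiAut a⁻¹ := ⟨_, h3⟩
    exact h4.spec.unique h3 h2

theorem runder_hanoiWith {n : ℕ} {s : Equiv.Perm (Word k)} (h : s ∈ Runder k n) :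
    IsHanoiWith s (inactivePegs s) := by
  rcases h with h | h
  · subst h; rw [inactivePegs_one]; exact isHanoiWith_one
  · exact h.1.spec

theorem runder_inv {n : ℕ} {s : Equiv.Perm (Word k)} (h : s ∈ Runder k n) :
    s⁻¹ ∈ Runder k n := by
  rcases h with h | ⟨hHA, hc1, hc2⟩
  · left; rw [h, inv_one]
  · right
    have hQ : inactivePegs s⁻¹ = inactivePegs s := inactivePegs_inv hHA
    refine ⟨⟨_, hHA.spec.inv⟩, ?_, ?_⟩
    · rw [hQ]; exact hc1
    · rw [hQ]
      intro i hi x t ht1 ht2 hmod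
      rw [rootPerm_inv hHA.spec.1]
      apply (rootPerm s).injective
      rw [Equiv.Perm.apply_inv_self, hc2 i hi x t ht1 ht2 hmod]

theorem inactivePegs_inv_runder {n : ℕ} {s : Equiv.Perm (Word k)} (h : s ∈ Runder k n) :
    inactivePegs s⁻¹ = inactivePegs s := by
  rcases h with h | h
  · rw [h, inv_one]
  · exact inactivePegs_inv h.1

theorem hanoi_det {a b : Equiv.Perm (Word k)} {Q : Set (Fin k)}
    (ha : IsHanoiWith a Q) (hb : IsHanoiWith b Q) (hσ : rootPerm a = rootPerm b) : a = b := by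
  refine Equiv.ext fun w => ?_
  induction w with
  | nil => rw [treeAut_nil ha.1, treeAut_nil hb.1]
  | cons x u ih =>
    rw [sec_spec ha.1, sec_spec hb.1, hσ]
    by_cases hx : x ∈ Q
    · rw [ha.2.2.1 x hx, hb.2.2.1 x hx, ih]
    · rw [ha.2.1 x hx, hb.2.1 x hx]

theorem finite_hanoiAuts : {a : Equiv.Perm (Word k) | IsHanoiAut a}.Finite := by
  classical
  apply Set.Finite.of_finite_image
    (f := fun a => ((inactivePegs a, rootPerm a) : Set (Fin k) × Equiv.Perm (Fin k)))
  · exact Set.toFinite _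
  · intro a ha b hb hab
    have ha' := Set.mem_setOf_eq ▸ ha
    have hb' := Set.mem_setOf_eq ▸ hb
    have hQ : inactivePegs a = inactivePegs b := congrArg Prod.fst hab
    have hσ : rootPerm a = rootPerm b := congrArg Prod.snd hab
    exact hanoi_det (hQ ▸ IsHanoiAut.spec ha') (IsHanoiAut.spec hb') hσ

theorem runder_finite (n : ℕ) : (Runder k n).Finite := by
  apply Set.Finite.subset (finite_hanoiAuts.union (Set.finite_singleton 1))
  intro a ha
  rcases ha with h | h
  · exact Or.inr h
  · exact Or.inl h.1

end Aux2

section Aux3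
variable {k : ℕ}

/-- Products of a list of elements each of which is a Hanoi automorphism
with inactive pegs in a given set `T`. -/
def PRset (T : Set (Equiv.Perm (Word k))) : Set (Equiv.Perm (Word k)) :=
  {g | ∃ L : List (Equiv.Perm (Word k)), (∀ s ∈ L, s ∈ T) ∧ L.prod = g}

theorem one_mem_PRset (T : Set (Equiv.Perm (Word k))) : (1 : Equiv.Perm (Word k)) ∈ PRset T :=
  ⟨[], by simp, rfl⟩

theorem lemA {L : List (Equiv.Perm (Word k))} {x : Fin k}
    (h : ∀ s ∈ L, IsHanoiWith s (inactivePegs s) ∧ x ∈ inactivePegs s) :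
    rootPerm L.prod x = x ∧ sec L.prod x = L.prod := by
  induction L with
  | nil =>
    rw [List.prod_nil]
    exact ⟨by rw [rootPerm_one]; rfl, sec_one x⟩
  | cons s L' ih =>
    have hs := h s (List.mem_cons_self)
    have hL' : ∀ t ∈ L', IsHanoiWith t (inactivePegs t) ∧ x ∈ inactivePegs t :=
      fun t ht => h t (List.mem_cons_of_mem s ht)
    obtain ⟨ih1, ih2⟩ := ih hL'
    have hp : IsTreeAut L'.prod := isTreeAut_prod fun t ht => (hL' t ht).1.1
    constructor
    · rw [List.prod_cons, rootPerm_mul hs.1.1 hp, ih1, hs.1.2.2.2 x hs.2]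
    · rw [List.prod_cons, sec_mul hs.1.1 hp, ih1, ih2, hs.1.2.2.1 x hs.2]

theorem lemGen {L : List (Equiv.Perm (Word k))}
    (h : ∀ s ∈ L, IsHanoiWith s (inactivePegs s)) (x : Fin k) :
    ∃ M : List (Equiv.Perm (Word k)), (∀ t ∈ M, t ∈ L) ∧ M.prod = sec L.prod x := by
  induction L with
  | nil => exact ⟨[], by simp, by rw [List.prod_nil, sec_one]⟩
  | cons s L' ih =>
    have hs := h s (List.mem_cons_self)
    have hL' : ∀ t ∈ L', IsHanoiWith t (inactivePegs t) :=
      fun t ht => h t (List.mem_cons_of_mem s ht)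
    obtain ⟨M', hM'mem, hM'⟩ := ih hL'
    have hp : IsTreeAut L'.prod := isTreeAut_prod fun t ht => (hL' t ht).1
    by_cases hy : rootPerm L'.prod x ∈ inactivePegs s
    · refine ⟨s :: M', ?_, ?_⟩
      · intro t ht
        rcases List.mem_cons.mp ht with h1 | h1
        · exact List.mem_cons.mpr (Or.inl h1)
        · exact List.mem_cons_of_mem s (hM'mem t h1)
      · rw [List.prod_cons, List.prod_cons, sec_mul hs.1 hp, hs.2.2.1 _ hy, hM']
    · refine ⟨M', fun t ht => List.mem_cons_of_mem s (hM'mem t ht), ?_⟩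
      rw [List.prod_cons, sec_mul hs.1 hp, hs.2.1 _ hy, one_mul, hM']

theorem lemB {L : List (Equiv.Perm (Word k))} {x : Fin k}
    (h : ∀ s ∈ L, IsHanoiWith s (inactivePegs s)) (hfix : ∀ s ∈ L, rootPerm s x = x) :
    rootPerm L.prod x = x ∧
      ∃ M : List (Equiv.Perm (Word k)),
        (∀ t ∈ M, t ∈ L ∧ x ∈ inactivePegs t) ∧ M.prod = sec L.prod x := by
  induction L with
  | nil =>
    rw [List.prod_nil]
    exact ⟨by rw [rootPerm_one]; rfl, ⟨[], by simp, by rw [List.prod_nil, sec_one]⟩⟩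
  | cons s L' ih =>
    have hs := h s (List.mem_cons_self)
    have hsf := hfix s (List.mem_cons_self)
    have hL' : ∀ t ∈ L', IsHanoiWith t (inactivePegs t) :=
      fun t ht => h t (List.mem_cons_of_mem s ht)
    have hL'f : ∀ t ∈ L', rootPerm t x = x := fun t ht => hfix t (List.mem_cons_of_mem s ht)
    obtain ⟨ih1, M', hM'mem, hM'⟩ := ih hL' hL'f
    have hp : IsTreeAut L'.prod := isTreeAut_prod fun t ht => (hL' t ht).1
    refine ⟨by rw [List.prod_cons, rootPerm_mul hs.1 hp, ih1, hsf], ?_⟩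
    by_cases hy : x ∈ inactivePegs s
    · refine ⟨s :: M', ?_, ?_⟩
      · intro t ht
        rcases List.mem_cons.mp ht with h1 | h1
        · rw [h1]; exact ⟨List.mem_cons_self, hy⟩
        · exact ⟨List.mem_cons_of_mem s (hM'mem t h1).1, (hM'mem t h1).2⟩
      · rw [List.prod_cons, List.prod_cons, sec_mul hs.1 hp, ih1, hs.2.2.1 _ hy, hM']
    · refine ⟨M', fun t ht => ⟨List.mem_cons_of_mem s (hM'mem t ht).1, (hM'mem t ht).2⟩, ?_⟩
      rw [List.prod_cons, sec_mul hs.1 hp, ih1, hs.2.1 _ hy, one_mul, hM']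

theorem lemC {L : List (Equiv.Perm (Word k))} (A : Set (Fin k))
    (h : ∀ s ∈ L, IsHanoiWith s (inactivePegs s) ∧ ∀ y ∈ A, rootPerm s y ∈ A)
    {x : Fin k} (hx : x ∈ A) :
    rootPerm L.prod x ∈ A ∧
      ∃ M : List (Equiv.Perm (Word k)),
        (∀ t ∈ M, t ∈ L ∧ (A ∩ inactivePegs t).Nonempty) ∧ M.prod = sec L.prod x := by
  induction L with
  | nil =>
    rw [List.prod_nil]
    exact ⟨by rw [rootPerm_one]; exact hx, ⟨[], by simp, by rw [List.prod_nil, sec_one]⟩⟩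
  | cons s L' ih =>
    have hs := h s (List.mem_cons_self)
    have hL' : ∀ t ∈ L', IsHanoiWith t (inactivePegs t) ∧ ∀ y ∈ A, rootPerm t y ∈ A :=
      fun t ht => h t (List.mem_cons_of_mem s ht)
    obtain ⟨ih1, M', hM'mem, hM'⟩ := ih hL'
    have hp : IsTreeAut L'.prod := isTreeAut_prod fun t ht => (hL' t ht).1.1
    refine ⟨by rw [List.prod_cons, rootPerm_mul hs.1.1 hp]; exact hs.2 _ ih1, ?_⟩
    by_cases hy : rootPerm L'.prod x ∈ inactivePegs s
    · refine ⟨s :: M', ?_, ?_⟩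
      · intro t ht
        rcases List.mem_cons.mp ht with h1 | h1
        · rw [h1]; exact ⟨List.mem_cons_self, ⟨rootPerm L'.prod x, ih1, hy⟩⟩
        · exact ⟨List.mem_cons_of_mem s (hM'mem t h1).1, (hM'mem t h1).2⟩
      · rw [List.prod_cons, List.prod_cons, sec_mul hs.1.1 hp, hs.1.2.2.1 _ hy, hM']
    · refine ⟨M', fun t ht => ⟨List.mem_cons_of_mem s (hM'mem t ht).1, (hM'mem t ht).2⟩, ?_⟩
      rw [List.prod_cons, sec_mul hs.1.1 hp, hs.1.2.1 _ hy, one_mul, hM']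

theorem lemDrop {L : List (Equiv.Perm (Word k))}
    (h : ∀ s ∈ L, IsHanoiWith s (inactivePegs s)) {x : Fin k}
    (hx : ∃ s ∈ L, x ∉ inactivePegs s) :
    ∃ M : List (Equiv.Perm (Word k)),
      (∀ t ∈ M, t ∈ L) ∧ M.prod = sec L.prod x ∧ M.length < L.length := by
  induction L with
  | nil => simp at hx
  | cons s L' ih =>
    have hs := h s (List.mem_cons_self)
    have hL' : ∀ t ∈ L', IsHanoiWith t (inactivePegs t) :=
      fun t ht => h t (List.mem_cons_of_mem s ht)
    have hp : IsTreeAut L'.prod := isTreeAut_prod fun t ht => (hL' t ht).1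
    by_cases hx' : ∃ t ∈ L', x ∉ inactivePegs t
    · obtain ⟨M', hmem, hprod, hlen⟩ := ih hL' hx'
      by_cases hy : rootPerm L'.prod x ∈ inactivePegs s
      · refine ⟨s :: M', ?_, ?_, by simpa using hlen⟩
        · intro t ht
          rcases List.mem_cons.mp ht with h1 | h1
          · exact List.mem_cons.mpr (Or.inl h1)
          · exact List.mem_cons_of_mem s (hmem t h1)
        · rw [List.prod_cons, List.prod_cons, sec_mul hs.1 hp, hs.2.2.1 _ hy, hprod]
      · refine ⟨M', fun t ht => List.mem_cons_of_mem s (hmem t ht), ?_, by simp; omega⟩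
        rw [List.prod_cons, sec_mul hs.1 hp, hs.2.1 _ hy, one_mul, hprod]
    · push_neg at hx'
      have hxs : x ∉ inactivePegs s := by
        rcases hx with ⟨t, ht, hxt⟩
        rcases List.mem_cons.mp ht with h1 | h1
        · exact h1 ▸ hxt
        · exact absurd (hx' t h1) hxt
      obtain ⟨h1, h2⟩ := lemA fun t ht => ⟨hL' t ht, hx' t ht⟩
      refine ⟨L', fun t ht => List.mem_cons_of_mem s ht, ?_, by simp⟩
      rw [List.prod_cons, sec_mul hs.1 hp, h1, hs.2.1 x hxs, one_mul, h2]

theorem PRset_treeAut {T : Set (Equiv.Perm (Word k))}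
    (hT : ∀ s ∈ T, IsHanoiWith s (inactivePegs s)) {g : Equiv.Perm (Word k)}
    (hg : g ∈ PRset T) : IsTreeAut g := by
  obtain ⟨L, hL, rfl⟩ := hg
  exact isTreeAut_prod fun t ht => (hT t (hL t ht)).1

theorem PRset_sec {T : Set (Equiv.Perm (Word k))}
    (hT : ∀ s ∈ T, IsHanoiWith s (inactivePegs s)) {g : Equiv.Perm (Word k)}
    (hg : g ∈ PRset T) (x : Fin k) : sec g x ∈ PRset T := by
  obtain ⟨L, hL, rfl⟩ := hg
  obtain ⟨M, hM, hMp⟩ := lemGen (fun s hs => hT s (hL s hs)) x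
  exact ⟨M, fun t ht => hL t (hM t ht), hMp⟩

theorem PRset_secW {T : Set (Equiv.Perm (Word k))}
    (hT : ∀ s ∈ T, IsHanoiWith s (inactivePegs s)) {g : Equiv.Perm (Word k)}
    (hg : g ∈ PRset T) (v : Word k) : secW g v ∈ PRset T := by
  induction v generalizing g with
  | nil => exact hg
  | cons x v' ih => exact ih (PRset_sec hT hg x)

theorem secW_one (v : Word k) : secW (1 : Equiv.Perm (Word k)) v = 1 := by
  induction v with
  | nil => rfl
  | cons x v' ih =>
    show secW (sec 1 x) v' = 1
    rw [sec_one]; exact ih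

theorem PRset_finite_of_B (T : Finset (Equiv.Perm (Word k)))
    (hT : ∀ s ∈ T, IsHanoiWith s (inactivePegs s))
    (B : Fin k → Set (Equiv.Perm (Word k))) (hBf : ∀ x, (B x).Finite)
    (hB : ∀ g ∈ PRset (↑T : Set (Equiv.Perm (Word k))), ∀ x : Fin k,
      (¬ ∀ s ∈ T, x ∈ inactivePegs s) → sec g x ∈ B x) :
    (PRset (↑T : Set (Equiv.Perm (Word k)))).Finite := by
  classical
  set E : Set (Fin k) := {x | ∀ s ∈ T, x ∈ inactivePegs s} with hE
  set Φ : Equiv.Perm (Word k) → Equiv.Perm (Fin k) × (Fin k → Equiv.Perm (Word k)) :=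
    fun g => (rootPerm g, fun x => if x ∈ E then 1 else sec g x) with hΦ
  have hT' : ∀ s ∈ (↑T : Set (Equiv.Perm (Word k))), IsHanoiWith s (inactivePegs s) :=
    fun s hs => hT s hs
  have himg : (Φ '' PRset ↑T).Finite := by
    apply Set.Finite.subset (Set.Finite.prod (Set.finite_univ)
      (Set.Finite.pi fun x => (hBf x).union (Set.finite_singleton 1)))
    rintro p ⟨g, hg, rfl⟩
    refine Set.mem_prod.mpr ⟨Set.mem_univ _, Set.mem_univ_pi.mpr fun x => ?_⟩
    by_cases hx : x ∈ E
    · simp only [hΦ, if_pos hx]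
      exact Or.inr rfl
    · simp only [hΦ, if_neg hx]
      exact Or.inl (hB g hg x hx)
  have hinj : Set.InjOn Φ (PRset ↑T) := by
    intro g hg h hh heq
    have hgt : IsTreeAut g := PRset_treeAut hT' hg
    have hht : IsTreeAut h := PRset_treeAut hT' hh
    have hσ : rootPerm g = rootPerm h := congrArg Prod.fst heq
    have hsec : ∀ x ∉ E, Hanoi.sec g x = Hanoi.sec h x := by
      intro x hx
      have h1 := congrFun (congrArg Prod.snd heq) x
      simpa only [hΦ, if_neg hx] using h1
    have hselfg : ∀ x ∈ E, rootPerm g x = x ∧ Hanoi.sec g x = g := by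
      intro x hx
      obtain ⟨L, hL, rfl⟩ := hg
      exact lemA fun t ht => ⟨hT' t (hL t ht), hx t (hL t ht)⟩
    have hselfh : ∀ x ∈ E, rootPerm h x = x ∧ Hanoi.sec h x = h := by
      intro x hx
      obtain ⟨L, hL, rfl⟩ := hh
      exact lemA fun t ht => ⟨hT' t (hL t ht), hx t (hL t ht)⟩
    refine Equiv.ext fun w => ?_
    induction w with
    | nil => rw [treeAut_nil hgt, treeAut_nil hht]
    | cons x u ih =>
      rw [sec_spec hgt, sec_spec hht]
      by_cases hx : x ∈ E
      · obtain ⟨hg1, hg2⟩ := hselfg x hx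
        obtain ⟨hh1, hh2⟩ := hselfh x hx
        rw [hg1, hh1, hg2, hh2, ih]
      · rw [hσ, hsec x hx]
  exact Set.Finite.of_finite_image himg hinj

end Aux3

section Aux4
variable {k : ℕ}

/-- The property of being (the identity or) a generator from `R̲_{k,n}` whose
inactive pegs contain `j`. -/
def RjP (n : ℕ) (j : Fin k) (s : Equiv.Perm (Word k)) : Prop :=
  j ∈ inactivePegs s ∧ s ∈ Runder k n

theorem RjP.hanoiWith {n : ℕ} {j : Fin k} {s : Equiv.Perm (Word k)} (h : RjP n j s) :
    IsHanoiWith s (inactivePegs s) := runder_hanoiWith h.2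

theorem RjP.inv {n : ℕ} {j : Fin k} {s : Equiv.Perm (Word k)} (h : RjP n j s) :
    RjP n j s⁻¹ :=
  ⟨by rw [inactivePegs_inv_runder h.2]; exact h.1, runder_inv h.2⟩

theorem star_lemma (hn : 1 ≤ n) (hk : 0 < k) (T : Finset (Equiv.Perm (Word k))) (j : Fin k)
    (hR : ∀ s ∈ T, RjP n j s)
    (hne : ∃ y : Fin k, ¬ ∀ s ∈ T, rootPerm s y = y) :
    ∃ s ∈ T, ∀ q ∈ inactivePegs s, ∀ s' ∈ T, rootPerm s' q = q := by
  classical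
  haveI : NeZero k := ⟨hk.ne'⟩
  obtain ⟨y₀, hy₀⟩ := hne
  set T₁ := T.filter (fun s => s ≠ 1) with hT₁
  have hT₁ne : T₁.Nonempty := by
    by_contra hemp
    rw [Finset.not_nonempty_iff_eq_empty] at hemp
    apply hy₀
    intro s hs
    have hs1 : s = 1 := by
      by_contra h1
      exact Finset.eq_empty_iff_forall_notMem.mp hemp s (Finset.mem_filter.mpr ⟨hs, h1⟩)
    rw [hs1, rootPerm_one]; rfl
  set ι : Fin k → ZMod k := fun x => ((x : ℕ) : ZMod k) with hι
  have ιinj : Function.Injective ι := by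
    intro a b hab
    have ha := ZMod.val_natCast_of_lt a.isLt
    have hb := ZMod.val_natCast_of_lt b.isLt
    have h1 := congrArg ZMod.val hab
    rw [hι] at h1
    simp only at h1
    rw [ha, hb] at h1
    exact Fin.ext h1
  have keyNat : ∀ (q i : Fin k) (t : ℕ), ι q + (t : ZMod k) = ι i →
      ((q : ℕ) + t) % k = (i : ℕ) := by
    intro q i t h
    have h2 : (((q : ℕ) + t : ℕ) : ZMod k) = (((i : ℕ) : ℕ) : ZMod k) := by
      push_cast
      exact h
    have h3 := congrArg ZMod.val h2
    rw [ZMod.val_natCast, ZMod.val_natCast] at h3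
    rw [h3]
    exact Nat.mod_eq_of_lt i.isLt
  have castmod : ∀ (m q : Fin k) (t : ℕ), (q : ℕ) = ((m : ℕ) + t) % k →
      ι q = ι m + (t : ZMod k) := by
    intro m q t h
    have h1 : ((q : ℕ) : ZMod k) = ((((m : ℕ) + t) % k : ℕ) : ZMod k) := by
      rw [h]
    rw [ZMod.natCast_mod] at h1
    rw [hι]; simp only
    rw [h1]; push_cast; ring
  set D : Equiv.Perm (Word k) → Finset ℕ := fun s =>
    (Finset.range n).filter (fun d => ∃ q ∈ inactivePegs s, ι q = ι j + (d : ZMod k)) with hD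
  set es : Equiv.Perm (Word k) → ℕ :=
    fun s => (insert 0 (D s)).max' (Finset.insert_nonempty 0 (D s)) with hes
  have hD0 : ∀ s ∈ T₁, 0 ∈ D s := by
    intro s hs
    have hj : j ∈ inactivePegs s := (hR s (Finset.mem_of_mem_filter s hs)).1
    simp only [hD, Finset.mem_filter, Finset.mem_range]
    exact ⟨by omega, ⟨j, hj, by simp⟩⟩
  have hes_mem : ∀ s ∈ T₁, es s ∈ D s := by
    intro s hs
    rcases Finset.mem_insert.mp (Finset.max'_mem (insert 0 (D s)) (Finset.insert_nonempty 0 (D s)))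
      with h0 | h
    · rw [hes]; simp only; rw [h0]; exact hD0 s hs
    · exact h
  have hes_le : ∀ s, ∀ d ∈ D s, d ≤ es s := fun s d hd =>
    Finset.le_max' _ d (Finset.mem_insert_of_mem hd)
  obtain ⟨sstar, hstarT₁, hstarmin⟩ := T₁.exists_min_image es hT₁ne
  have hstarT : sstar ∈ T := Finset.mem_of_mem_filter sstar hstarT₁
  refine ⟨sstar, hstarT, ?_⟩
  intro q hq s' hs'
  by_cases h1 : s' = 1
  · rw [h1, rootPerm_one]; rfl
  have hs'T₁ : s' ∈ T₁ := Finset.mem_filter.mpr ⟨hs', h1⟩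
  obtain ⟨hjs', hrun'⟩ := hR s' hs'
  have hHW' : IsHanoiWith s' (inactivePegs s') := runder_hanoiWith hrun'
  rcases hrun' with h1' | ⟨hHA', hc1', hc2'⟩
  · exact absurd h1' h1
  obtain ⟨hjstar, hrunstar⟩ := hR sstar hstarT
  have hstar1 : sstar ≠ 1 := (Finset.mem_filter.mp hstarT₁).2
  rcases hrunstar with h1s | ⟨hHAs, hc1s, hc2s⟩
  · exact absurd h1s hstar1
  obtain ⟨m, hm⟩ := hc1s
  obtain ⟨tq, htq1, htqn, htqe⟩ := hm q hq
  obtain ⟨tj, htj1, htjn, htje⟩ := hm j hjstar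
  have hq' : ι q = ι m + (tq : ZMod k) := castmod m q tq htqe
  have hj' : ι j = ι m + (tj : ZMod k) := castmod m j tj htje
  rcases le_or_gt tj tq with hle | hlt
  · -- q = j + d with d = tq - tj
    have hqd : ι q = ι j + ((tq - tj : ℕ) : ZMod k) := by
      have h2 : ((tq - tj : ℕ) : ZMod k) = (tq : ZMod k) - (tj : ZMod k) := Nat.cast_sub hle
      rw [hq', hj', h2]
      ring
    have hdD : (tq - tj) ∈ D sstar := by
      simp only [hD, Finset.mem_filter, Finset.mem_range]
      exact ⟨by omega, ⟨q, hq, hqd⟩⟩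
    have hdes : tq - tj ≤ es s' := le_trans (hes_le sstar _ hdD) (hstarmin s' hs'T₁)
    have hesD := hes_mem s' hs'T₁
    simp only [hD, Finset.mem_filter, Finset.mem_range] at hesD
    obtain ⟨hesn, qs, hqsmem, hqs⟩ := hesD
    rcases eq_or_lt_of_le hdes with heq | hlt2
    · have hqqs : q = qs := ιinj (by rw [hqd, hqs, heq])
      rw [hqqs]
      exact hHW'.2.2.2 qs hqsmem
    · apply hc2' qs hqsmem q (es s' - (tq - tj)) (by omega) (by omega)
      apply keyNat
      have hdt : (tq - tj) + (es s' - (tq - tj)) = es s' := by omega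
      calc ι q + ((es s' - (tq - tj) : ℕ) : ZMod k)
          = ι j + (((tq - tj) + (es s' - (tq - tj)) : ℕ) : ZMod k) := by
            rw [hqd]; push_cast; ring
        _ = ι qs := by rw [hdt, hqs]
  · -- q = j - t with t = tj - tq
    apply hc2' j hjs' q (tj - tq) (by omega) (by omega)
    apply keyNat
    have hdt : tq + (tj - tq) = tj := by omega
    calc ι q + ((tj - tq : ℕ) : ZMod k)
        = ι m + ((tq + (tj - tq) : ℕ) : ZMod k) := by rw [hq']; push_cast; ring
      _ = ι j := by rw [hdt, hj']

end Aux4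

section Aux5
variable {k : ℕ}

theorem PRset_T_finite (n : ℕ) (hn : 1 ≤ n) (hk : 0 < k) (j : Fin k) :
    ∀ (c : ℕ) (T : Finset (Equiv.Perm (Word k))), T.card ≤ c →
      (∀ s ∈ T, RjP n j s) → (∀ s ∈ T, s⁻¹ ∈ T) →
      (PRset (↑T : Set (Equiv.Perm (Word k)))).Finite := by
  intro c
  induction c with
  | zero =>
    intro T hc _ _
    have hT0 : T = ∅ := Finset.card_eq_zero.mp (Nat.le_zero.mp hc)
    subst hT0
    apply Set.Finite.subset (Set.finite_singleton (1 : Equiv.Perm (Word k)))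
    rintro g ⟨L, hL, rfl⟩
    cases L with
    | nil => simp
    | cons s L' => simpa using hL s (List.mem_cons_self)
  | succ c ih =>
    intro T hc hR hinv
    classical
    have hHW : ∀ s ∈ T, IsHanoiWith s (inactivePegs s) := fun s hs => (hR s hs).hanoiWith
    have hQinv : ∀ s ∈ T, inactivePegs s⁻¹ = inactivePegs s :=
      fun s hs => inactivePegs_inv_runder (hR s hs).2
    by_cases hFu : ∀ y : Fin k, ∀ s ∈ T, rootPerm s y = y
    · -- every letter is fixed by all root permutations
      apply PRset_finite_of_B T hHW
        (B := fun x => if (∀ s ∈ T, x ∈ inactivePegs s) then {1}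
          else PRset ↑(T.filter (fun s => x ∈ inactivePegs s)))
      · intro x
        split_ifs with hxE
        · exact Set.finite_singleton 1
        · push_neg at hxE
          obtain ⟨s₀, hs₀T, hs₀x⟩ := hxE
          have hsub : T.filter (fun s => x ∈ inactivePegs s) ⊂ T :=
            (Finset.ssubset_iff_of_subset (Finset.filter_subset _ _)).mpr
              ⟨s₀, hs₀T, by simp [hs₀x]⟩
          apply ih _ (by have := Finset.card_lt_card hsub; omega)
          · intro s hs
            exact hR s (Finset.mem_of_mem_filter s hs)
          · intro s hs
            have hs' := Finset.mem_filter.mp hs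
            refine Finset.mem_filter.mpr ⟨hinv s hs'.1, ?_⟩
            rw [hQinv s hs'.1]
            exact hs'.2
      · intro g hg x hxE
        rw [if_neg hxE]
        obtain ⟨L, hL, rfl⟩ := hg
        obtain ⟨-, M, hMmem, hMp⟩ := lemB (fun s hs => hHW s (hL s hs))
          (fun s hs => hFu x s (hL s hs))
        refine ⟨M, fun t ht => ?_, hMp⟩
        simp only [Finset.coe_filter, Set.mem_setOf_eq]
        exact ⟨hL t (hMmem t ht).1, (hMmem t ht).2⟩
    · -- there is a letter moved by some root permutation
      push_neg at hFu
      obtain ⟨sstar, hstarT, hstarQ⟩ := star_lemma hn hk T j hR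
        (by obtain ⟨y, hy⟩ := hFu; exact ⟨y, by push_neg; exact hy⟩)
      set Fx : Set (Fin k) := {y | ∀ s ∈ T, rootPerm s y = y} with hFx
      apply PRset_finite_of_B T hHW
        (B := fun x => if (∀ s ∈ T, x ∈ inactivePegs s) then {1}
          else if x ∈ Fx then PRset ↑(T.filter (fun s => x ∈ inactivePegs s))
          else PRset ↑((T.erase sstar).erase sstar⁻¹))
      · intro x
        split_ifs with hxE hxF
        · exact Set.finite_singleton 1
        · push_neg at hxE
          obtain ⟨s₀, hs₀T, hs₀x⟩ := hxE
          have hsub : T.filter (fun s => x ∈ inactivePegs s) ⊂ T :=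
            (Finset.ssubset_iff_of_subset (Finset.filter_subset _ _)).mpr
              ⟨s₀, hs₀T, by simp [hs₀x]⟩
          apply ih _ (by have := Finset.card_lt_card hsub; omega)
          · intro s hs
            exact hR s (Finset.mem_of_mem_filter s hs)
          · intro s hs
            have hs' := Finset.mem_filter.mp hs
            refine Finset.mem_filter.mpr ⟨hinv s hs'.1, ?_⟩
            rw [hQinv s hs'.1]
            exact hs'.2
        · have hcard : ((T.erase sstar).erase sstar⁻¹).card ≤ c := by
            have h1 : ((T.erase sstar).erase sstar⁻¹).card ≤ (T.erase sstar).card :=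
              Finset.card_le_card (Finset.erase_subset _ _)
            have h2 : (T.erase sstar).card = T.card - 1 := Finset.card_erase_of_mem hstarT
            have h3 : 1 ≤ T.card := Finset.card_pos.mpr ⟨sstar, hstarT⟩
            omega
          apply ih _ hcard
          · intro s hs
            exact hR s (Finset.mem_of_mem_erase (Finset.mem_of_mem_erase hs))
          · intro s hs
            have h1 : s ≠ sstar⁻¹ := (Finset.mem_erase.mp hs).1
            have h2 : s ≠ sstar := (Finset.mem_erase.mp (Finset.mem_of_mem_erase hs)).1
            have h3 : s ∈ T := Finset.mem_of_mem_erase (Finset.mem_of_mem_erase hs)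
            refine Finset.mem_erase.mpr ⟨?_, Finset.mem_erase.mpr ⟨?_, hinv s h3⟩⟩
            · intro hc'; exact h2 (by rw [← inv_inv s, hc', inv_inv])
            · intro hc'; exact h1 (by rw [← inv_inv s, hc'])
      · intro g hg x hxE
        rw [if_neg hxE]
        by_cases hxF : x ∈ Fx
        · rw [if_pos hxF]
          obtain ⟨L, hL, rfl⟩ := hg
          obtain ⟨-, M, hMmem, hMp⟩ := lemB (fun s hs => hHW s (hL s hs))
            (fun s hs => hxF s (hL s hs))
          refine ⟨M, fun t ht => ?_, hMp⟩
          simp only [Finset.coe_filter, Set.mem_setOf_eq]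
          exact ⟨hL t (hMmem t ht).1, (hMmem t ht).2⟩
        · rw [if_neg hxF]
          obtain ⟨L, hL, rfl⟩ := hg
          have hAinv : ∀ s ∈ L, IsHanoiWith s (inactivePegs s) ∧
              ∀ y ∈ Fxᶜ, rootPerm s y ∈ Fxᶜ := by
            intro s hs
            refine ⟨hHW s (hL s hs), ?_⟩
            intro y hy
            intro hcon
            apply hy
            have hy2 : rootPerm s y ∈ Fx := hcon
            have h4 : rootPerm s⁻¹ (rootPerm s y) = rootPerm s y :=
              hy2 s⁻¹ (hinv s (hL s hs))
            rw [rootPerm_inv (hHW s (hL s hs)).1, Equiv.Perm.inv_apply_self] at h4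
            rw [h4]
            exact hy2
          obtain ⟨-, M, hMmem, hMp⟩ := lemC Fxᶜ hAinv (hx := hxF)
          refine ⟨M, fun t ht => ?_, hMp⟩
          obtain ⟨htL, y, hyA, hyQ⟩ := hMmem t ht
          have htT : t ∈ T := hL t htL
          have htne1 : t ≠ sstar := by
            rintro rfl
            exact hyA (hstarQ y hyQ)
          have htne2 : t ≠ sstar⁻¹ := by
            rintro rfl
            rw [hQinv sstar hstarT] at hyQ
            exact hyA (hstarQ y hyQ)
          exact Finset.mem_coe.mpr
            (Finset.mem_erase.mpr ⟨htne2, Finset.mem_erase.mpr ⟨htne1, htT⟩⟩)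

end Aux5

/-- Proposition: Hanoi groups generated by subsets of
`R̲_{k,n}` are contracting. -/
theorem Runder_contracting {k n : ℕ} (hn : 1 ≤ n) (hk : 2 * n + 1 ≤ k)
    (S : Set (Equiv.Perm (Word k))) (hS1 : (1 : Equiv.Perm (Word k)) ∈ S)
    (hS : S ⊆ Runder k n) :
    IsContracting (Subgroup.closure S) := by
  classical
  have hk0 : 0 < k := by omega
  have hSfin : S.Finite := (runder_finite n).subset hS
  set SS : Set (Equiv.Perm (Word k)) := S ∪ (fun s => s⁻¹) '' S with hSS
  have hSSfin : SS.Finite := hSfin.union (hSfin.image _)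
  have hSSsub : SS ⊆ Runder k n := by
    rintro s (hs | ⟨t, ht, rfl⟩)
    · exact hS hs
    · exact runder_inv (hS ht)
  have hSSinv : ∀ s ∈ SS, s⁻¹ ∈ SS := by
    rintro s (hs | ⟨t, ht, rfl⟩)
    · exact Or.inr ⟨s, hs, rfl⟩
    · exact Or.inl (by rw [inv_inv]; exact ht)
  set Tm : Fin k → Finset (Equiv.Perm (Word k)) :=
    fun j => hSSfin.toFinset.filter (fun s => j ∈ inactivePegs s) with hTm
  have hTmgood : ∀ j : Fin k, ∀ s ∈ Tm j, RjP n j s := by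
    intro j s hs
    have hs' := Finset.mem_filter.mp hs
    exact ⟨hs'.2, hSSsub (hSSfin.mem_toFinset.mp hs'.1)⟩
  have hTminv : ∀ j : Fin k, ∀ s ∈ Tm j, s⁻¹ ∈ Tm j := by
    intro j s hs
    have hs' := Finset.mem_filter.mp hs
    have hsSS : s ∈ SS := hSSfin.mem_toFinset.mp hs'.1
    refine Finset.mem_filter.mpr ⟨hSSfin.mem_toFinset.mpr (hSSinv s hsSS), ?_⟩
    rw [inactivePegs_inv_runder (hSSsub hsSS)]
    exact hs'.2
  have hTmHW : ∀ j : Fin k, ∀ s ∈ (↑(Tm j) : Set (Equiv.Perm (Word k))),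
      IsHanoiWith s (inactivePegs s) := fun j s hs => (hTmgood j s hs).hanoiWith
  set N : Set (Equiv.Perm (Word k)) := ⋃ j : Fin k, PRset ↑(Tm j) with hN
  have hNfin : N.Finite :=
    Set.finite_iUnion fun j =>
      PRset_T_finite n hn hk0 j (Tm j).card (Tm j) le_rfl (hTmgood j) (hTminv j)
  have hNsub : N ⊆ (Subgroup.closure S : Subgroup (Equiv.Perm (Word k))) := by
    intro g hg
    rw [hN, Set.mem_iUnion] at hg
    obtain ⟨j, L, hL, rfl⟩ := hg
    apply list_prod_mem
    intro s hs
    have hsSS : s ∈ SS := hSSfin.mem_toFinset.mp (Finset.mem_filter.mp (hL s hs)).1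
    rcases hsSS with h | ⟨t, ht, rfl⟩
    · exact Subgroup.subset_closure h
    · exact inv_mem (Subgroup.subset_closure ht)
  have claim : ∀ r : ℕ, ∀ L : List (Equiv.Perm (Word k)), (∀ s ∈ L, s ∈ SS) →
      L.length ≤ r → ∀ v : Word k, r ≤ v.length → secW L.prod v ∈ N := by
    intro r
    induction r with
    | zero =>
      intro L hL hlen v _
      have hL0 : L = [] := List.length_eq_zero_iff.mp (Nat.le_zero.mp hlen)
      subst hL0
      rw [List.prod_nil, secW_one]
      rw [hN, Set.mem_iUnion]
      exact ⟨⟨0, hk0⟩, one_mem_PRset _⟩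
    | succ r ih =>
      intro L hL hlen v hv
      have hLHW : ∀ s ∈ L, IsHanoiWith s (inactivePegs s) :=
        fun s hs => runder_hanoiWith (hSSsub (hL s hs))
      by_cases hE : ∃ j : Fin k, ∀ s ∈ L, j ∈ inactivePegs s
      · obtain ⟨j, hj⟩ := hE
        have hmem : L.prod ∈ PRset (↑(Tm j) : Set (Equiv.Perm (Word k))) := by
          refine ⟨L, fun s hs => ?_, rfl⟩
          exact Finset.mem_coe.mpr
            (Finset.mem_filter.mpr ⟨hSSfin.mem_toFinset.mpr (hL s hs), hj s hs⟩)
        rw [hN, Set.mem_iUnion]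
        exact ⟨j, PRset_secW (hTmHW j) hmem v⟩
      · push_neg at hE
        cases v with
        | nil => simp at hv
        | cons x v' =>
          obtain ⟨M, hMmem, hMprod, hMlen⟩ := lemDrop hLHW (hE x)
          show secW (sec L.prod x) v' ∈ N
          rw [← hMprod]
          refine ih M (fun s hs => hL s (hMmem s hs)) (by omega) v' ?_
          have : (x :: v').length = v'.length + 1 := rfl
          omega
  refine ⟨N, hNfin, hNsub, ?_⟩
  intro g hg
  have hg' : g ∈ Submonoid.closure (S ∪ S⁻¹) := by
    rw [← Subgroup.closure_toSubmonoid]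
    exact hg
  obtain ⟨L, hL, hLprod⟩ := Submonoid.exists_list_of_mem_closure hg'
  refine ⟨L.length, fun v hv => ?_⟩
  rw [← hLprod]
  apply claim L.length L ?_ le_rfl v hv
  intro s hs
  rcases hL s hs with h | h
  · exact Or.inl h
  · exact Or.inr ⟨s⁻¹, Set.mem_inv.mp h, inv_inv s⟩

end Hanoi
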